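/- arXiv:2504.04848 — 7 statements merged into one kernel-verified Lean document; each statement's English description precedes it below -/
import Mathlib

section
/- Let X be a real Banach space and let x ∈ S_X. If x is an almost locally uniformly rotund (aLUR) point of S_X, then x is a nicely strongly exposed (NSE) point of S_X, i.e., x is strongly exposed by every functional in its duality set D(x). -/
open Filter Topology NormedSpace

/-- `x` is strongly exposed by the functional `f`: every sequence in the closed unit ball
on which `f` tends to `1` converges in norm to `x`. -/
def StronglyExposedBy {X : Type*} [NormedAddCommGroup X] [NormedSpace ℝ X]
    (x : X) (f : StrongDual ℝ X) : Prop :=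
  ∀ xs : ℕ → X, (∀ n, ‖xs n‖ ≤ 1) →
    Tendsto (fun n => f (xs n)) atTop (𝓝 1) → Tendsto xs atTop (𝓝 x)

/-- `x` is a nicely strongly exposed (NSE) point of the unit sphere: it is strongly exposed
by every norm-one functional attaining the value `1` at `x`. -/
def NSEPoint {X : Type*} [NormedAddCommGroup X] [NormedSpace ℝ X] (x : X) : Prop :=
  ∀ f : StrongDual ℝ X, ‖f‖ = 1 → f x = 1 → StronglyExposedBy x f

/-- `x` is an almost locally uniformly rotund (aLUR) point of the unit sphere. -/
def ALURPoint {X : Type*} [NormedAddCommGroup X] [NormedSpace ℝ X] (x : X) : Prop :=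
  ∀ (xs : ℕ → X) (fs : ℕ → StrongDual ℝ X) (α : ℕ → ℝ),
    (∀ n, ‖xs n‖ = 1) → (∀ m, ‖fs m‖ = 1) →
    (∀ m, Tendsto (fun n => fs m ((2 : ℝ)⁻¹ • (xs n + x))) atTop (𝓝 (α m))) →
    Tendsto α atTop (𝓝 1) →
    Tendsto xs atTop (𝓝 x)

/-- If `x ∈ S_X` is an aLUR point of `S_X`, then `x` is an NSE point of `S_X`. -/
theorem aLUR_implies_NSE {X : Type*} [NormedAddCommGroup X] [NormedSpace ℝ X]
    [CompleteSpace X] (x : X) (hx : ‖x‖ = 1) (h : ALURPoint x) : NSEPoint x := by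
  intro f hf hfx xs hxs hten
  have hle : ∀ n, f (xs n) ≤ ‖xs n‖ := by
    intro n
    calc f (xs n) ≤ ‖f (xs n)‖ := le_abs_self _
    _ ≤ ‖f‖ * ‖xs n‖ := f.le_opNorm _
    _ = ‖xs n‖ := by rw [hf, one_mul]
  have hnorm : Tendsto (fun n => ‖xs n‖) atTop (𝓝 1) :=
    tendsto_of_tendsto_of_tendsto_of_le_of_le hten tendsto_const_nhds hle hxs
  set ys : ℕ → X := fun n => if hn : ‖xs n‖ = 0 then x else ‖xs n‖⁻¹ • xs n with hysdef
  have hys1 : ∀ n, ‖ys n‖ = 1 := by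
    intro n
    by_cases h0 : ‖xs n‖ = 0
    · simp [hysdef, h0, hx]
    · have : xs n ≠ 0 := fun hc => h0 (by simp [hc])
      simp only [hysdef]
      rw [dif_neg h0, norm_smul, norm_inv, norm_norm, inv_mul_cancel₀ h0]
  -- eventually ‖xs n‖ is positive
  have hev : ∀ᶠ n in atTop, (1:ℝ)/2 < ‖xs n‖ := by
    have := hnorm.eventually (eventually_gt_nhds (by norm_num : (1:ℝ)/2 < 1))
    exact this
  have hfy : Tendsto (fun n => f (ys n)) atTop (𝓝 1) := by
    have heq : (fun n => f (ys n)) =ᶠ[atTop] fun n => ‖xs n‖⁻¹ * f (xs n) := by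
      filter_upwards [hev] with n hn
      have h0 : ‖xs n‖ ≠ 0 := by linarith
      simp [hysdef, h0]
    have : Tendsto (fun n => ‖xs n‖⁻¹ * f (xs n)) atTop (𝓝 (1⁻¹ * 1)) :=
      (hnorm.inv₀ one_ne_zero).mul hten
    simpa using this.congr' heq.symm
  have hALUR := h ys (fun _ => f) (fun _ => 1) hys1 (fun _ => hf) ?_ tendsto_const_nhds
  · -- conclude xs → x
    have hsm : Tendsto (fun n => ‖xs n‖ • ys n) atTop (𝓝 ((1:ℝ) • x)) :=
      hnorm.smul hALUR
    have heq : (fun n => ‖xs n‖ • ys n) =ᶠ[atTop] xs := by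
      filter_upwards [hev] with n hn
      have h0 : ‖xs n‖ ≠ 0 := by linarith
      simp [hysdef, h0, smul_smul, mul_inv_cancel₀ h0]
    simpa using hsm.congr' heq
  · intro m
    have : Tendsto (fun n => (2:ℝ)⁻¹ * (f (ys n) + f x)) atTop (𝓝 ((2:ℝ)⁻¹ * (1 + 1))) :=
      tendsto_const_nhds.mul (hfy.add (by rw [hfx] at *; exact tendsto_const_nhds))
    have h2 : ((2:ℝ)⁻¹ * (1 + 1)) = 1 := by norm_num
    rw [h2] at this
    refine this.congr fun n => ?_
    simp [map_smul, map_add, smul_eq_mul]; ring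
end

section
/- Let X be a real Banach space and let x ∈ S_X. If x is an almost locally uniformly rotund (aLUR) point of S_X, then x satisfies property aLUR': for every pair of sequences {x_n} ⊂ S_X and {x_m*} ⊂ S_{X*} such that lim_m (liminf_n x_m*((x_n + x)/2)) = 1, the sequence {x_n} converges in norm to x. -/
open Filter Topology NormedSpace

/-- `x` satisfies property aLUR': whenever
`lim_m (liminf_n x_m*((x_n + x)/2)) = 1`, the sequence `{x_n}` converges in norm to `x`. -/
def ALURPoint' {X : Type*} [NormedAddCommGroup X] [NormedSpace ℝ X] (x : X) : Prop :=
  ∀ (xs : ℕ → X) (fs : ℕ → StrongDual ℝ X),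
    (∀ n, ‖xs n‖ = 1) → (∀ m, ‖fs m‖ = 1) →
    Tendsto (fun m => liminf (fun n => fs m ((2 : ℝ)⁻¹ • (xs n + x))) atTop) atTop (𝓝 1) →
    Tendsto xs atTop (𝓝 x)

/-- If `x ∈ S_X` is an aLUR point of `S_X`, then `x` satisfies property aLUR'. -/
theorem aLUR_implies_aLUR' {X : Type*} [NormedAddCommGroup X] [NormedSpace ℝ X]
    [CompleteSpace X] (x : X) (hx : ‖x‖ = 1) (h : ALURPoint x) : ALURPoint' x := by
  intro xs fs hxs hfs hlim
  -- the values lie in [-1, 1]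
  have hbound : ∀ m n, fs m ((2 : ℝ)⁻¹ • (xs n + x)) ∈ Set.Icc (-1 : ℝ) 1 := by
    intro m n
    have h1 : ‖(2 : ℝ)⁻¹ • (xs n + x)‖ ≤ 1 := by
      rw [norm_smul]
      have := norm_add_le (xs n) x
      rw [hxs n, hx] at this
      simp only [norm_inv, Real.norm_ofNat]
      nlinarith
    have h2 : |fs m ((2 : ℝ)⁻¹ • (xs n + x))| ≤ 1 := by
      calc |fs m ((2 : ℝ)⁻¹ • (xs n + x))| = ‖fs m ((2 : ℝ)⁻¹ • (xs n + x))‖ := rfl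
        _ ≤ ‖fs m‖ * ‖(2 : ℝ)⁻¹ • (xs n + x)‖ := (fs m).le_opNorm _
        _ ≤ 1 := by rw [hfs m]; linarith
    exact abs_le.mp h2
  refine tendsto_of_subseq_tendsto fun ns hns => ?_
  -- use compactness of the countable product of [-1,1]
  set y : ℕ → (ℕ → Set.Icc (-1 : ℝ) 1) :=
    fun k m => ⟨fs m ((2 : ℝ)⁻¹ • (xs (ns k) + x)), hbound m (ns k)⟩ with hy
  obtain ⟨a, -, φ, hφmono, hφtend⟩ :=
    (isCompact_univ (X := ℕ → Set.Icc (-1 : ℝ) 1)).tendsto_subseq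
      (fun k => Set.mem_univ (y k))
  rw [tendsto_pi_nhds] at hφtend
  -- pointwise convergence of the functional values along the subsequence
  have hα : ∀ m, Tendsto (fun k => fs m ((2 : ℝ)⁻¹ • (xs (ns (φ k)) + x))) atTop
      (𝓝 ((a m : ℝ))) := by
    intro m
    exact ((continuous_subtype_val.tendsto _).comp (hφtend m))
  -- each limit dominates the liminf
  have hβle : ∀ m, liminf (fun n => fs m ((2 : ℝ)⁻¹ • (xs n + x))) atTop ≤ (a m : ℝ) := by
    intro m
    have hmap : map (fun k => ns (φ k)) atTop ≤ atTop :=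
      (hns.comp hφmono.tendsto_atTop)
    have hbd : atTop.IsBoundedUnder (· ≥ ·) (fun n => fs m ((2 : ℝ)⁻¹ • (xs n + x))) :=
      ⟨-1, by rw [eventually_map]; exact Eventually.of_forall fun n => (hbound m n).1⟩
    have hcb : (map (fun k => ns (φ k)) atTop).IsCoboundedUnder (· ≥ ·)
        (fun n => fs m ((2 : ℝ)⁻¹ • (xs n + x))) := by
      refine IsBoundedUnder.isCoboundedUnder_ge ⟨1, ?_⟩
      rw [eventually_map, eventually_map]
      exact Eventually.of_forall fun k => (hbound m (ns (φ k))).2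
    have := liminf_le_liminf_of_le hmap hbd hcb
    exact le_of_le_of_eq this ((hα m).liminf_eq)
  have hle1 : ∀ m, (a m : ℝ) ≤ 1 := fun m => (a m).2.2
  -- squeeze: α m → 1
  have hαlim : Tendsto (fun m => (a m : ℝ)) atTop (𝓝 1) := by
    have h1 : Tendsto (fun _ : ℕ => (1 : ℝ)) atTop (𝓝 1) := tendsto_const_nhds
    exact tendsto_of_tendsto_of_tendsto_of_le_of_le hlim h1
      (fun m => hβle m) hle1
  refine ⟨φ, ?_⟩
  exact h (fun k => xs (ns (φ k))) fs (fun m => (a m : ℝ))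
    (fun k => hxs _) hfs hα hαlim
end

section
/- Let X be a real Banach space and let x ∈ S_X. Then x is an almost locally uniformly rotund (aLUR) point of S_X if and only if x satisfies property aLUR'. -/
open Filter Topology NormedSpace

/-- `x ∈ S_X` is an aLUR point of `S_X` if and only if `x` satisfies property aLUR'. -/
theorem aLUR_iff_aLUR' {X : Type*} [NormedAddCommGroup X] [NormedSpace ℝ X]
    [CompleteSpace X] (x : X) (hx : ‖x‖ = 1) : ALURPoint x ↔ ALURPoint' x := by
  constructor
  · -- ALUR → aLUR'
    intro hA xs fs hxs hfs hlim
    -- bound: each value lies in [-1, 1]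
    have hbd : ∀ (m k : ℕ), fs m ((2 : ℝ)⁻¹ • (xs k + x)) ∈ Set.Icc (-1 : ℝ) 1 := by
      intro m k
      have h1 : ‖(2 : ℝ)⁻¹ • (xs k + x)‖ ≤ 1 := by
        rw [norm_smul]
        have : ‖xs k + x‖ ≤ 2 := by
          calc ‖xs k + x‖ ≤ ‖xs k‖ + ‖x‖ := norm_add_le _ _
          _ = 2 := by rw [hxs k, hx]; norm_num
        calc ‖(2:ℝ)⁻¹‖ * ‖xs k + x‖ ≤ ‖(2:ℝ)⁻¹‖ * 2 := by
              apply mul_le_mul_of_nonneg_left this (norm_nonneg _)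
        _ = 1 := by norm_num
      have h2 : |fs m ((2 : ℝ)⁻¹ • (xs k + x))| ≤ 1 := by
        calc |fs m ((2 : ℝ)⁻¹ • (xs k + x))| ≤ ‖fs m‖ * ‖(2 : ℝ)⁻¹ • (xs k + x)‖ :=
              (fs m).le_opNorm _
        _ ≤ 1 := by rw [hfs m, one_mul]; exact h1
      exact Set.mem_Icc.mpr (abs_le.mp h2)
    by_contra hnot
    rw [Metric.tendsto_atTop] at hnot
    push_neg at hnot
    obtain ⟨ε, hε, hfreq⟩ := hnot
    have hfreq' : ∃ᶠ n in atTop, ε ≤ dist (xs n) x := by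
      rw [frequently_atTop]
      intro N
      obtain ⟨n, hn, hdn⟩ := hfreq N
      exact ⟨n, hn, hdn⟩
    obtain ⟨φ, hφmono, hφ⟩ := Filter.extraction_of_frequently_atTop hfreq'
    -- sequence in the compact space [-1,1]^ℕ
    set u : ℕ → ℕ → ℝ := fun n m => fs m ((2 : ℝ)⁻¹ • (xs (φ n) + x)) with hu
    have hcomp : IsCompact (Set.pi Set.univ (fun _ : ℕ => Set.Icc (-1 : ℝ) 1)) :=
      isCompact_univ_pi (fun _ => isCompact_Icc)
    have humem : ∀ n, u n ∈ Set.pi Set.univ (fun _ : ℕ => Set.Icc (-1 : ℝ) 1) := by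
      intro n m _
      exact hbd m (φ n)
    obtain ⟨β, hβmem, ψ, hψmono, hψtend⟩ := hcomp.tendsto_subseq humem
    have hcoord : ∀ m, Tendsto (fun n => fs m ((2 : ℝ)⁻¹ • (xs (φ (ψ n)) + x)))
        atTop (𝓝 (β m)) := by
      intro m
      exact (tendsto_pi_nhds.mp hψtend m)
    -- β m ≥ liminf of the full sequence
    set L : ℕ → ℝ := fun m => liminf (fun n => fs m ((2 : ℝ)⁻¹ • (xs n + x))) atTop with hL
    have hLβ : ∀ m, L m ≤ β m := by
      intro m
      by_contra hlt
      push_neg at hlt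
      obtain ⟨c, hc1, hc2⟩ := exists_between hlt
      have hbdd : IsBoundedUnder (· ≥ ·) atTop (fun n => fs m ((2 : ℝ)⁻¹ • (xs n + x))) :=
        isBoundedUnder_of ⟨-1, fun n => (hbd m n).1⟩
      have hev : ∀ᶠ n in atTop, c < fs m ((2 : ℝ)⁻¹ • (xs n + x)) :=
        eventually_lt_of_lt_liminf hc2 hbdd
      have hcomp2 : Tendsto (fun n => φ (ψ n)) atTop atTop :=
        (hφmono.comp hψmono).tendsto_atTop
      have hev2 : ∀ᶠ n in atTop, c < fs m ((2 : ℝ)⁻¹ • (xs (φ (ψ n)) + x)) :=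
        hcomp2.eventually hev
      have : c ≤ β m := ge_of_tendsto (hcoord m) (hev2.mono fun n h => le_of_lt h)
      linarith
    have hβ1 : ∀ m, β m ≤ 1 := fun m => (hβmem m (Set.mem_univ m)).2
    have hβtend : Tendsto β atTop (𝓝 1) :=
      tendsto_of_tendsto_of_tendsto_of_le_of_le hlim tendsto_const_nhds
        (fun m => hLβ m) (fun m => hβ1 m)
    have hconv : Tendsto (fun n => xs (φ (ψ n))) atTop (𝓝 x) :=
      hA (fun n => xs (φ (ψ n))) fs β (fun n => hxs _) hfs hcoord hβtend
    have : Tendsto (fun n => dist (xs (φ (ψ n))) x) atTop (𝓝 0) :=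
      tendsto_iff_dist_tendsto_zero.mp hconv
    have hcontra : (0 : ℝ) < ε := hε
    have := ge_of_tendsto this (Eventually.of_forall fun n => hφ (ψ n))
    linarith
  · -- aLUR' → ALUR
    intro hA' xs fs α hxs hfs hlim hα
    apply hA' xs fs hxs hfs
    have heq : ∀ m, liminf (fun n => fs m ((2 : ℝ)⁻¹ • (xs n + x))) atTop = α m :=
      fun m => (hlim m).liminf_eq
    simpa only [heq] using hα
end

section
/- Let X be a reflexive real Banach space and let x ∈ S_X. If x is a nicely strongly exposed (NSE) point of S_X, then x is an almost locally uniformly rotund (aLUR) point of S_X. -/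
open Filter Topology NormedSpace

lemma se_epsdelta {X : Type*} [NormedAddCommGroup X] [NormedSpace ℝ X]
    {x : X} {f : StrongDual ℝ X} (hse : StronglyExposedBy x f) (hf : ‖f‖ = 1)
    {ε : ℝ} (hε : 0 < ε) :
    ∃ δ > 0, ∀ u : X, ‖u‖ ≤ 1 → 1 - δ < f u → ‖u - x‖ < ε := by
  by_contra hcon
  push_neg at hcon
  have key : ∀ k : ℕ, ∃ u : X, ‖u‖ ≤ 1 ∧ 1 - 1/(k+1) < f u ∧ ε ≤ ‖u - x‖ := by
    intro k
    obtain ⟨u, hu1, hu2, hu3⟩ := hcon (1/(k+1)) (by positivity)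
    exact ⟨u, hu1, hu2, hu3⟩
  choose u hu1 hu2 hu3 using key
  have hub : ∀ k, f (u k) ≤ 1 := by
    intro k
    calc f (u k) ≤ |f (u k)| := le_abs_self _
    _ ≤ ‖f‖ * ‖u k‖ := f.le_opNorm (u k)
    _ ≤ 1 := by rw [hf]; simpa using hu1 k
  have hlow : Tendsto (fun k : ℕ => 1 - 1/((k:ℝ)+1)) atTop (𝓝 1) := by
    have := tendsto_one_div_add_atTop_nhds_zero_nat (𝕜 := ℝ)
    simpa using tendsto_const_nhds.sub this
  have hft : Tendsto (fun k => f (u k)) atTop (𝓝 1) :=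
    tendsto_of_tendsto_of_tendsto_of_le_of_le hlow tendsto_const_nhds
      (fun k => le_of_lt (hu2 k)) hub
  have := hse u hu1 hft
  rw [Metric.tendsto_atTop] at this
  obtain ⟨N, hN⟩ := this ε hε
  have := hN N le_rfl
  rw [dist_eq_norm] at this
  exact absurd (hu3 N) (not_le.mpr this)

/-- In a reflexive Banach space, every NSE point of the unit sphere is an aLUR point. -/
theorem NSE_implies_aLUR_of_reflexive {X : Type*} [NormedAddCommGroup X] [NormedSpace ℝ X]
    [CompleteSpace X]
    (hrefl : Function.Surjective ⇑(inclusionInDoubleDual ℝ X))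
    (x : X) (hx : ‖x‖ = 1) (h : NSEPoint x) : ALURPoint x := by
  intro xs fs α hxs hfs hlim hα
  set y : ℕ → X := fun n => (2:ℝ)⁻¹ • (xs n + x) with hy_def
  have hy : ∀ n, ‖y n‖ ≤ 1 := by
    intro n
    calc ‖y n‖ = |(2:ℝ)⁻¹| * ‖xs n + x‖ := by rw [hy_def]; rw [norm_smul, Real.norm_eq_abs]
    _ ≤ (2:ℝ)⁻¹ * (‖xs n‖ + ‖x‖) := by
        rw [abs_of_pos (by norm_num)]
        exact mul_le_mul_of_nonneg_left (norm_add_le _ _) (by norm_num)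
    _ ≤ 1 := by rw [hxs n, hx]; norm_num
  by_contra hc
  rw [Metric.tendsto_atTop] at hc
  push_neg at hc
  obtain ⟨ε, hε, hfar⟩ := hc
  have hfreq' : ∃ᶠ n in atTop, ε ≤ dist (xs n) x :=
    frequently_atTop.mpr fun N => by
      obtain ⟨n, hn, hd⟩ := hfar N; exact ⟨n, hn, hd⟩
  have hne : (atTop ⊓ 𝓟 {n | ε ≤ dist (xs n) x}).NeBot :=
    frequently_iff_neBot.mp hfreq'
  obtain ⟨U, hU⟩ := Filter.exists_ultrafilter_le (atTop ⊓ 𝓟 {n | ε ≤ dist (xs n) x})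
  have hUtop : (U : Filter ℕ) ≤ atTop := hU.trans inf_le_left
  have hUS : ∀ᶠ n in (U : Filter ℕ), ε ≤ dist (xs n) x :=
    le_principal_iff.mp (hU.trans inf_le_right)
  -- ultrafilter limits
  have hlimU : ∀ f : StrongDual ℝ X, ∃ c : ℝ, Tendsto (fun n => f (y n)) (U : Filter ℕ) (𝓝 c) := by
    intro f
    have hmem : ∀ n, f (y n) ∈ Set.Icc (-‖f‖) ‖f‖ := by
      intro n
      have h1 : |f (y n)| ≤ ‖f‖ := by
        calc |f (y n)| ≤ ‖f‖ * ‖y n‖ := f.le_opNorm (y n)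
        _ ≤ ‖f‖ * 1 := mul_le_mul_of_nonneg_left (hy n) (norm_nonneg f)
        _ = ‖f‖ := mul_one _
      exact ⟨neg_le_of_abs_le h1, le_of_abs_le h1⟩
    have hle : (U.map fun n => f (y n) : Filter ℝ) ≤ 𝓟 (Set.Icc (-‖f‖) ‖f‖) := by
      rw [Ultrafilter.coe_map, le_principal_iff]
      exact mem_map.mpr (Eventually.of_forall hmem)
    obtain ⟨a, -, ha⟩ := isCompact_Icc.ultrafilter_le_nhds (U.map fun n => f (y n)) hle
    rw [Ultrafilter.coe_map] at ha
    exact ⟨a, ha⟩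
  choose c hcU using hlimU
  -- additivity / smul / bound of c
  have hadd : ∀ f g : StrongDual ℝ X, c (f + g) = c f + c g := by
    intro f g
    refine tendsto_nhds_unique ?_ ((hcU f).add (hcU g))
    have : (fun n => (f + g) (y n)) = fun n => f (y n) + g (y n) := by
      funext n; simp
    rw [← this]; exact hcU (f + g)
  have hsmul : ∀ (r : ℝ) (f : StrongDual ℝ X), c (r • f) = r * c f := by
    intro r f
    refine tendsto_nhds_unique ?_ ((hcU f).const_mul r)
    have : (fun n => (r • f) (y n)) = fun n => r * f (y n) := by
      funext n; simp
    rw [← this]; exact hcU (r • f)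
  have hbound : ∀ f : StrongDual ℝ X, |c f| ≤ ‖f‖ := by
    intro f
    refine le_of_tendsto (hcU f).abs (Eventually.of_forall fun n => ?_)
    calc |f (y n)| ≤ ‖f‖ * ‖y n‖ := f.le_opNorm (y n)
    _ ≤ ‖f‖ * 1 := mul_le_mul_of_nonneg_left (hy n) (norm_nonneg f)
    _ = ‖f‖ := mul_one _
  -- build the double-dual element and pull back
  set Φ : StrongDual ℝ (StrongDual ℝ X) :=
    LinearMap.mkContinuous
      { toFun := c, map_add' := hadd, map_smul' := hsmul } 1
      (fun f => by rw [Real.norm_eq_abs, one_mul]; exact hbound f) with hΦ_def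
  obtain ⟨w, hw⟩ := hrefl Φ
  have hwf : ∀ f : StrongDual ℝ X, Tendsto (fun n => f (y n)) (U : Filter ℕ) (𝓝 (f w)) := by
    intro f
    have h1 : f w = c f := by
      have := congrFun (congrArg (fun T : StrongDual ℝ (StrongDual ℝ X) => (T : StrongDual ℝ X → ℝ)) hw) f
      simpa [dual_def, hΦ_def] using this
    rw [h1]; exact hcU f
  -- fs m w = α m
  have hαw : ∀ m, fs m w = α m := fun m =>
    tendsto_nhds_unique (hwf (fs m)) ((hlim m).mono_left hUtop)
  -- norm of w is 1
  have hwle : ‖w‖ ≤ 1 := by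
    refine norm_le_dual_bound ℝ w zero_le_one fun f => ?_
    rw [one_mul, Real.norm_eq_abs]
    refine le_of_tendsto (hwf f).abs (Eventually.of_forall fun n => ?_)
    calc |f (y n)| ≤ ‖f‖ * ‖y n‖ := f.le_opNorm (y n)
    _ ≤ ‖f‖ * 1 := mul_le_mul_of_nonneg_left (hy n) (norm_nonneg f)
    _ = ‖f‖ := mul_one _
  have hwge : 1 ≤ ‖w‖ := by
    refine le_of_tendsto hα (Eventually.of_forall fun m => ?_)
    calc α m ≤ |α m| := le_abs_self _
    _ = |fs m w| := by rw [hαw m]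
    _ ≤ ‖fs m‖ * ‖w‖ := (fs m).le_opNorm w
    _ = ‖w‖ := by rw [hfs m, one_mul]
  have hw1 : ‖w‖ = 1 := le_antisymm hwle hwge
  have hw0 : w ≠ 0 := by
    intro h0; rw [h0, norm_zero] at hw1; norm_num at hw1
  obtain ⟨f, hf1, hfw⟩ := exists_dual_vector ℝ w (norm_ne_zero_iff.mpr hw0)
  rw [hw1] at hfw
  have hfw : f w = 1 := by exact_mod_cast hfw
  -- z = 2w - x, the weak limit of xs along U
  set z : X := (2:ℝ) • w - x with hz_def
  have hz_lim : ∀ g : StrongDual ℝ X, Tendsto (fun n => g (xs n)) (U : Filter ℕ) (𝓝 (g z)) := by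
    intro g
    have heq : (fun n => g (xs n)) = fun n => 2 * g (y n) - g x := by
      funext n
      rw [hy_def]
      simp only [map_smul, map_add, smul_eq_mul]
      ring
    have h2 : Tendsto (fun n => 2 * g (y n) - g x) (U : Filter ℕ) (𝓝 (2 * g w - g x)) :=
      ((hwf g).const_mul 2).sub tendsto_const_nhds
    have h3 : g z = 2 * g w - g x := by
      rw [hz_def]; simp [map_sub, map_smul]
    rw [heq, h3]; exact h2
  have hz_norm : ‖z‖ ≤ 1 := by
    refine norm_le_dual_bound ℝ z zero_le_one fun g => ?_
    rw [one_mul, Real.norm_eq_abs]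
    refine le_of_tendsto (hz_lim g).abs (Eventually.of_forall fun n => ?_)
    calc |g (xs n)| ≤ ‖g‖ * ‖xs n‖ := g.le_opNorm (xs n)
    _ = ‖g‖ := by rw [hxs n, mul_one]
  -- f x = 1 and f z = 1
  have hfz_le : f z ≤ 1 := by
    calc f z ≤ |f z| := le_abs_self _
    _ ≤ ‖f‖ * ‖z‖ := f.le_opNorm z
    _ ≤ 1 := by rw [hf1, one_mul]; exact hz_norm
  have hfx_le : f x ≤ 1 := by
    calc f x ≤ |f x| := le_abs_self _
    _ ≤ ‖f‖ * ‖x‖ := f.le_opNorm x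
    _ = 1 := by rw [hf1, hx, mul_one]
  have hsum : f z + f x = 2 := by
    have : z + x = (2:ℝ) • w := by rw [hz_def]; abel
    have h4 : f (z + x) = f ((2:ℝ) • w) := by rw [this]
    rw [map_add, map_smul, smul_eq_mul, hfw] at h4
    linarith
  have hfx1 : f x = 1 := by linarith
  have hfz1 : f z = 1 := by linarith
  -- strong exposedness of x by f
  have hse : StronglyExposedBy x f := h f hf1 hfx1
  have hzx : z = x := by
    have ht := hse (fun _ => z) (fun _ => hz_norm)
      (by simp only [hfz1]; exact tendsto_const_nhds)
    exact tendsto_nhds_unique tendsto_const_nhds ht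
  have hwx : w = x := by
    have h2w : (2:ℝ) • w = (2:ℝ) • x := by
      calc (2:ℝ) • w = z + x := by rw [hz_def]; abel
      _ = x + x := by rw [hzx]
      _ = (2:ℝ) • x := (two_smul ℝ x).symm
    exact smul_right_injective X two_ne_zero h2w
  obtain ⟨δ, hδ, hδ'⟩ := se_epsdelta hse hf1 (half_pos hε)
  have hfy1 : Tendsto (fun n => f (y n)) (U : Filter ℕ) (𝓝 1) := by
    have := hwf f; rwa [hfw] at this
  have hev : ∀ᶠ n in (U : Filter ℕ), 1 - δ < f (y n) :=
    hfy1.eventually (eventually_gt_nhds (by linarith))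
  have hev2 : ∀ᶠ n in (U : Filter ℕ), ‖y n - x‖ < ε/2 :=
    hev.mono fun n hn => hδ' _ (hy n) hn
  obtain ⟨n, hn1, hn2⟩ := (hUS.and hev2).exists
  have heq : y n - x = (2:ℝ)⁻¹ • (xs n - x) := by
    rw [hy_def]; simp only [smul_sub, smul_add]; module
  have hnorm : ‖y n - x‖ = 2⁻¹ * ‖xs n - x‖ := by
    rw [heq, norm_smul, Real.norm_eq_abs]; norm_num
  rw [dist_eq_norm] at hn1
  linarith
end

section
/- Let X be a real Banach space and let x ∈ S_X. If x is a nicely strongly exposed (NSE) point of S_X, then x satisfies the following Pringsheim double-limit property: for every pair of sequences {x_n} ⊂ S_X and {x_m*} ⊂ S_{X*} such that for every ε > 0 there exists n₀ ∈ ℕ with x_m*((x_n + x)/2) > 1 − ε whenever n, m ≥ n₀, the sequence {x_n} converges in norm to x. -/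
open Filter Topology NormedSpace

/-- If `x ∈ S_X` is an NSE point, then for all sequences `{x_n} ⊂ S_X`, `{x_m*} ⊂ S_{X*}`
satisfying the Pringsheim double-limit condition
`lim_{m,n} x_m*((x_n + x)/2) = 1`, the sequence `{x_n}` converges in norm to `x`. -/
theorem NSE_implies_pringsheim {X : Type*} [NormedAddCommGroup X] [NormedSpace ℝ X]
    [CompleteSpace X] (x : X) (hx : ‖x‖ = 1) (h : NSEPoint x) :
    ∀ (xs : ℕ → X) (fs : ℕ → StrongDual ℝ X),
      (∀ n, ‖xs n‖ = 1) → (∀ m, ‖fs m‖ = 1) →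
      (∀ ε > (0 : ℝ), ∃ n₀ : ℕ, ∀ n m : ℕ, n₀ ≤ n → n₀ ≤ m →
        1 - ε < fs m ((2 : ℝ)⁻¹ • (xs n + x))) →
      Tendsto xs atTop (𝓝 x) := by
  intro xs fs hxs hfs hP
  have habs : ∀ m (z : X), |fs m z| ≤ ‖z‖ := fun m z => by
    simpa [hfs m] using (fs m).le_opNorm z
  have hval : ∀ m (z : X), fs m z ≤ ‖z‖ := fun m z =>
    (le_abs_self _).trans (habs m z)
  -- separate the two estimates
  have hsep : ∀ ε > (0:ℝ), ∃ n₀ : ℕ, ∀ n m : ℕ, n₀ ≤ n → n₀ ≤ m →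
      1 - 2*ε < fs m (xs n) ∧ 1 - 2*ε < fs m x := by
    intro ε hε
    obtain ⟨n₀, hn₀⟩ := hP ε hε
    refine ⟨n₀, fun n m hn hm => ?_⟩
    have h1 := hn₀ n m hn hm
    have h2 : fs m ((2:ℝ)⁻¹ • (xs n + x)) = 2⁻¹ * (fs m (xs n) + fs m x) := by
      simp [map_add, smul_eq_mul, mul_add]
    have hx1 : fs m x ≤ 1 := by simpa [hx] using hval m x
    have hx2 : fs m (xs n) ≤ 1 := by simpa [hxs n] using hval m (xs n)
    constructor <;> nlinarith [h1, h2]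
  -- limit functional along an ultrafilter
  let U : Ultrafilter ℕ := Ultrafilter.of atTop
  have hU : (U : Filter ℕ) ≤ atTop := Ultrafilter.of_le atTop
  have key : ∀ z : X, ∃ c : ℝ, Tendsto (fun m => fs m z) (U : Filter ℕ) (𝓝 c) := by
    intro z
    have hcpt : IsCompact (Metric.closedBall (0:ℝ) ‖z‖) := isCompact_closedBall 0 ‖z‖
    have hle : (Ultrafilter.map (fun m => fs m z) U : Filter ℝ) ≤
        Filter.principal (Metric.closedBall (0:ℝ) ‖z‖) := by
      rw [le_principal_iff, Ultrafilter.mem_coe, Ultrafilter.mem_map]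
      refine Filter.univ_mem' fun m => ?_
      simpa [Metric.mem_closedBall, Real.dist_eq] using habs m z
    obtain ⟨c, _, hc⟩ := hcpt.ultrafilter_le_nhds (Ultrafilter.map (fun m => fs m z) U) hle
    exact ⟨c, hc⟩
  choose φ hφ using key
  have hadd : ∀ z w, φ (z + w) = φ z + φ w := fun z w =>
    tendsto_nhds_unique (hφ (z + w)) (by simpa [map_add] using (hφ z).add (hφ w))
  have hsmul : ∀ (c : ℝ) z, φ (c • z) = c * φ z := fun c z =>
    tendsto_nhds_unique (hφ (c • z))
      (by simpa [map_smul, smul_eq_mul] using (hφ z).const_mul c)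
  have hbound : ∀ z, |φ z| ≤ ‖z‖ := fun z =>
    le_of_tendsto (hφ z).abs (Eventually.of_forall fun m => habs m z)
  let fl : X →ₗ[ℝ] ℝ :=
    { toFun := φ, map_add' := hadd, map_smul' := hsmul }
  let f : StrongDual ℝ X := LinearMap.mkContinuous fl 1
    (fun z => by simpa [fl, Real.norm_eq_abs] using hbound z)
  have hfeq : ∀ z, f z = φ z := fun z => rfl
  -- f x = 1
  have hfxlim : Tendsto (fun m => fs m x) atTop (𝓝 1) := by
    rw [Metric.tendsto_atTop]
    intro ε hε
    obtain ⟨n₀, hn₀⟩ := hsep (ε/3) (by linarith)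
    refine ⟨n₀, fun m hm => ?_⟩
    have h1 := (hn₀ n₀ m le_rfl hm).2
    have h2 : fs m x ≤ 1 := by simpa [hx] using hval m x
    rw [Real.dist_eq, abs_sub_lt_iff]
    constructor <;> linarith
  have hfx1 : f x = 1 := by
    rw [hfeq]
    exact tendsto_nhds_unique (hφ x) (hfxlim.mono_left hU)
  have hfnorm : ‖f‖ = 1 := by
    refine le_antisymm (LinearMap.mkContinuous_norm_le fl zero_le_one _) ?_
    calc (1:ℝ) = ‖f x‖ := by simp [hfx1]
    _ ≤ ‖f‖ * ‖x‖ := f.le_opNorm x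
    _ = ‖f‖ := by rw [hx, mul_one]
  -- f (xs n) → 1
  have hfxs : Tendsto (fun n => f (xs n)) atTop (𝓝 1) := by
    rw [Metric.tendsto_atTop]
    intro ε hε
    obtain ⟨n₀, hn₀⟩ := hsep (ε/3) (by linarith)
    refine ⟨n₀, fun n hn => ?_⟩
    have hge : 1 - 2*(ε/3) ≤ φ (xs n) := by
      refine ge_of_tendsto (hφ (xs n)) ?_
      filter_upwards [hU (eventually_ge_atTop n₀)] with m hm
      exact le_of_lt (hn₀ n m hn hm).1
    have hle1 : φ (xs n) ≤ 1 := by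
      have := (le_abs_self (φ (xs n))).trans (hbound (xs n))
      simpa [hxs n] using this
    rw [hfeq, Real.dist_eq, abs_sub_lt_iff]
    constructor <;> linarith
  exact h f hfnorm hfx1 xs (fun n => le_of_eq (hxs n)) hfxs
end

section
/- Let X be a real Banach space and let x ∈ S_X. Suppose that for every pair of sequences {x_n} ⊂ S_X and {x_m*} ⊂ S_{X*} satisfying the Pringsheim condition (for every ε > 0 there exists n₀ ∈ ℕ with x_m*((x_n + x)/2) > 1 − ε whenever n, m ≥ n₀) the sequence {x_n} converges in norm to x. Then x is a nicely strongly exposed (NSE) point of S_X. -/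
open Filter Topology NormedSpace

/-- If, for all sequences `{x_n} ⊂ S_X`, `{x_m*} ⊂ S_{X*}` satisfying the Pringsheim
double-limit condition `lim_{m,n} x_m*((x_n + x)/2) = 1`, the sequence `{x_n}` converges in
norm to `x`, then `x ∈ S_X` is an NSE point of `S_X`. -/
theorem pringsheim_implies_NSE {X : Type*} [NormedAddCommGroup X] [NormedSpace ℝ X]
    [CompleteSpace X] (x : X) (hx : ‖x‖ = 1)
    (h : ∀ (xs : ℕ → X) (fs : ℕ → StrongDual ℝ X),
      (∀ n, ‖xs n‖ = 1) → (∀ m, ‖fs m‖ = 1) →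
      (∀ ε > (0 : ℝ), ∃ n₀ : ℕ, ∀ n m : ℕ, n₀ ≤ n → n₀ ≤ m →
        1 - ε < fs m ((2 : ℝ)⁻¹ • (xs n + x))) →
      Tendsto xs atTop (𝓝 x)) :
    NSEPoint x := by
  intro f hf hfx xs hxs hto
  classical
  set ys : ℕ → X := fun n => if h : xs n = 0 then x else ‖xs n‖⁻¹ • xs n with hysdef
  have hysn : ∀ n, ‖ys n‖ = 1 := by
    intro n
    simp only [hysdef]
    split
    · exact hx
    · rename_i h0
      rw [norm_smul, norm_inv, norm_norm, inv_mul_cancel₀ (norm_ne_zero_iff.mpr h0)]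
  have hfb : ∀ n, f (xs n) ≤ ‖xs n‖ := by
    intro n
    calc f (xs n) ≤ ‖f (xs n)‖ := le_abs_self _
      _ ≤ ‖f‖ * ‖xs n‖ := f.le_opNorm _
      _ = ‖xs n‖ := by rw [hf, one_mul]
  have key : Tendsto ys atTop (𝓝 x) := by
    apply h ys (fun _ => f) hysn (fun _ => hf)
    intro ε hε
    have hlt : 1 - min ε 1 / 2 < 1 := by
      have := lt_min hε one_pos
      linarith
    obtain ⟨n₀, hn₀⟩ := eventually_atTop.mp (hto.eventually (eventually_gt_nhds hlt))
    refine ⟨n₀, fun n m hn _ => ?_⟩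
    have hfn := hn₀ n hn
    have hmin : (0:ℝ) < min ε 1 := lt_min hε one_pos
    have hminle : min ε 1 ≤ 1 := min_le_right _ _
    have hfpos : 0 < f (xs n) := by linarith
    have h0 : xs n ≠ 0 := by
      intro h0
      rw [h0, map_zero] at hfpos
      exact lt_irrefl _ hfpos
    have hyn : ys n = ‖xs n‖⁻¹ • xs n := by simp only [hysdef, dif_neg h0]
    have hnpos : 0 < ‖xs n‖ := norm_pos_iff.mpr h0
    have hinv : 1 ≤ ‖xs n‖⁻¹ := by
      have h1 := inv_pos.mpr hnpos
      have h2 := mul_inv_cancel₀ (ne_of_gt hnpos)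
      nlinarith [hxs n]
    have hfy : f (xs n) ≤ f (ys n) := by
      rw [hyn, map_smul, smul_eq_mul]
      nlinarith
    have : f ((2:ℝ)⁻¹ • (ys n + x)) = 2⁻¹ * (f (ys n) + 1) := by
      rw [map_smul, map_add, hfx, smul_eq_mul]
    rw [this]
    have hεmin : min ε 1 ≤ ε := min_le_left _ _
    nlinarith
  have hnorm : Tendsto (fun n => ‖xs n‖) atTop (𝓝 1) :=
    tendsto_of_tendsto_of_tendsto_of_le_of_le hto tendsto_const_nhds hfb hxs
  have hsm : Tendsto (fun n => ‖xs n‖ • ys n) atTop (𝓝 x) := by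
    have := hnorm.smul key
    simpa using this
  refine hsm.congr' ?_
  filter_upwards [hto.eventually (eventually_gt_nhds (by norm_num : (0:ℝ) < 1))] with n hn
  have h0 : xs n ≠ 0 := by
    intro h0
    rw [h0, map_zero] at hn
    exact lt_irrefl _ hn
  simp only [hysdef, dif_neg h0]
  rw [smul_inv_smul₀ (norm_ne_zero_iff.mpr h0)]
end

section
/- Let (X,‖·‖) be a real Banach space and let B ⊂ X be a convex, symmetric, norm-compact subset of X such that the set D = conv(B_{(X,‖·‖)} ∪ B) is the closed unit ball of a norm |||·||| on X equivalent to ‖·‖. Then, identifying X with its canonical image in the bidual X**, the closed unit ball of the bidual norm |||·|||** on X** equals conv(B_{(X**,‖·‖**)} ∪ B), where ‖·‖** denotes the bidual norm of ‖·‖. -/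
open Filter Topology NormedSpace

/-- `N` is a norm on `Z` equivalent to the original norm of `Z`. -/
structure IsEquivNorm {Z : Type*} [NormedAddCommGroup Z] [NormedSpace ℝ Z]
    (N : Z → ℝ) : Prop where
  add_le : ∀ x y : Z, N (x + y) ≤ N x + N y
  smul_eq : ∀ (a : ℝ) (x : Z), N (a • x) = |a| * N x
  lower : ∃ c > (0 : ℝ), ∀ x : Z, c * ‖x‖ ≤ N x
  upper : ∃ C > (0 : ℝ), ∀ x : Z, N x ≤ C * ‖x‖

open Set Metric

/-- Every continuous linear functional on a weak-star dual is given by evaluation at a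
point of the predual. -/
lemma weakdual_functional {E : Type*} [NormedAddCommGroup E] [NormedSpace ℝ E]
    (g : WeakDual ℝ E →L[ℝ] ℝ) : ∃ y : E, ∀ Ψ : WeakDual ℝ E, g Ψ = Ψ y := by
  set p : SeminormFamily ℝ (WeakDual ℝ E) E := (topDualPairing ℝ E).toSeminormFamily with hp
  have hwith : WithSeminorms p := (topDualPairing ℝ E).weakBilin_withSeminorms
  set q : Seminorm ℝ (WeakDual ℝ E) := (normSeminorm ℝ ℝ).comp g.toLinearMap with hq
  have hqc : Continuous q := continuous_norm.comp g.continuous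
  obtain ⟨s, C, -, hle⟩ := Seminorm.bound_of_continuous hwith q hqc
  set L : s → (WeakDual ℝ E) →ₗ[ℝ] ℝ := fun y => (topDualPairing ℝ E).flip (y : E) with hL
  have hker : ⨅ i, LinearMap.ker (L i) ≤ LinearMap.ker (g : WeakDual ℝ E →ₗ[ℝ] ℝ) := by
    intro Ψ hΨ
    simp only [Submodule.mem_iInf, LinearMap.mem_ker] at hΨ ⊢
    have hsup : (s.sup p) Ψ = 0 := by
      apply le_antisymm _ (apply_nonneg _ _)
      apply Seminorm.finset_sup_apply_le le_rfl
      intro i hi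
      have h0 : Ψ i = 0 := hΨ ⟨i, hi⟩
      show ‖Ψ i‖ ≤ 0
      rw [h0]; simp
    have hb : ‖g Ψ‖ ≤ (C : ℝ) * (s.sup p) Ψ := hle Ψ
    rw [hsup, mul_zero] at hb
    exact norm_le_zero_iff.mp hb
  have hmem := mem_span_of_iInf_ker_le_ker hker
  have := Fintype.ofFinite s
  obtain ⟨c, hc⟩ := (Submodule.mem_span_range_iff_exists_fun ℝ).mp hmem
  refine ⟨∑ i : s, c i • (i : E), fun Ψ => ?_⟩
  have := congrFun (congrArg (fun (f : WeakDual ℝ E →ₗ[ℝ] ℝ) => (f : WeakDual ℝ E → ℝ)) hc) Ψ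
  simp only [LinearMap.coe_sum, Finset.sum_apply, LinearMap.smul_apply] at this
  rw [show g Ψ = (g : WeakDual ℝ E →ₗ[ℝ] ℝ) Ψ from rfl, ← this]
  rw [map_sum]
  congr 1
  ext i
  rw [map_smul]
  rfl

lemma weakDual_locallyConvexSpace (E : Type*) [NormedAddCommGroup E] [NormedSpace ℝ E] :
    LocallyConvexSpace ℝ (WeakDual ℝ E) :=
  (topDualPairing ℝ E).weakBilin_withSeminorms.toLocallyConvexSpace

/-- Goldstine's theorem (the nontrivial inclusion): the bidual unit ball is contained in
the weak-star closure of the canonical image of the unit ball. -/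
lemma goldstine {X : Type*} [NormedAddCommGroup X] [NormedSpace ℝ X] :
    (⇑StrongDual.toWeakDual '' Metric.closedBall (0 : StrongDual ℝ (StrongDual ℝ X)) 1) ⊆
      closure ((fun x : X => StrongDual.toWeakDual (inclusionInDoubleDual ℝ X x)) ''
        Metric.closedBall 0 1) := by
  have _inst : LocallyConvexSpace ℝ (WeakDual ℝ (StrongDual ℝ X)) :=
    weakDual_locallyConvexSpace _
  rintro _ ⟨Φ, hΦ, rfl⟩
  by_contra hnot
  set C := closure ((fun x : X => StrongDual.toWeakDual (inclusionInDoubleDual ℝ X x)) ''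
      Metric.closedBall 0 1) with hC
  have hCconv : Convex ℝ C := by
    apply Convex.closure
    have : Convex ℝ (Metric.closedBall (0:X) 1) := convex_closedBall _ _
    exact this.is_linear_image ⟨fun a b => by simp [map_add], fun a b => by simp [map_smul]⟩
  obtain ⟨f, u, hfu, hu⟩ := geometric_hahn_banach_closed_point hCconv isClosed_closure hnot
  obtain ⟨y, hy⟩ := weakdual_functional f
  have hupos : 0 < u := by
    have h0 : (0:WeakDual ℝ (StrongDual ℝ X)) ∈ C := by
      apply subset_closure
      exact ⟨0, by simp, by simp⟩
    simpa using hfu 0 h0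
  have hyle : ∀ x : X, ‖x‖ ≤ 1 → y x < u := by
    intro x hx
    have hmem : (StrongDual.toWeakDual (inclusionInDoubleDual ℝ X x)) ∈ C :=
      subset_closure ⟨x, by simpa using hx, rfl⟩
    have := hfu _ hmem
    rwa [hy] at this
  have hnorm : ‖y‖ ≤ u := by
    apply ContinuousLinearMap.opNorm_le_of_ball one_pos hupos.le
    intro x hx
    rcases eq_or_ne x 0 with rfl | hx0
    · simp [hupos.le]
    · have hxn : (0:ℝ) < ‖x‖ := norm_pos_iff.mpr hx0
      set z := ‖x‖⁻¹ • x with hz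
      have hz1 : ‖z‖ ≤ 1 := by
        rw [hz, norm_smul, norm_inv, norm_norm, inv_mul_cancel₀ hxn.ne']
      have h1 : y z < u := hyle z hz1
      have h2 : y (-z) < u := hyle (-z) (by simpa using hz1)
      have habs : ‖y z‖ ≤ u := by
        rw [Real.norm_eq_abs, abs_le]
        constructor
        · have : -(y z) < u := by simpa using h2
          linarith
        · linarith
      have hyx : y x = ‖x‖ * y z := by
        rw [hz, map_smul, smul_eq_mul, ← mul_assoc, mul_inv_cancel₀ hxn.ne', one_mul]
      rw [hyx, norm_mul, norm_norm, mul_comm]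
      exact mul_le_mul_of_nonneg_right habs (norm_nonneg x)
  have hΦy : (StrongDual.toWeakDual Φ : WeakDual ℝ (StrongDual ℝ X)) y = Φ y := rfl
  have hlt : u < Φ y := by rw [← hΦy, ← hy]; exact hu
  have : Φ y ≤ u := by
    calc Φ y ≤ ‖Φ y‖ := le_abs_self _
    _ ≤ ‖Φ‖ * ‖y‖ := Φ.le_opNorm y
    _ ≤ 1 * u := by
        apply mul_le_mul _ hnorm (norm_nonneg _) zero_le_one
        simpa using (mem_closedBall_zero_iff (E := StrongDual ℝ (StrongDual ℝ X))).mp hΦ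
    _ = u := one_mul u
  linarith

/-- The convex join of two compact sets is compact. -/
lemma isCompact_convexJoin' {E : Type*} [AddCommGroup E] [Module ℝ E] [TopologicalSpace E]
    [IsTopologicalAddGroup E] [ContinuousSMul ℝ E] {s t : Set E}
    (hs : IsCompact s) (ht : IsCompact t) : IsCompact (convexJoin ℝ s t) := by
  have heq : convexJoin ℝ s t =
      (fun p : ℝ × E × E => (1 - p.1) • p.2.1 + p.1 • p.2.2) '' (Icc (0:ℝ) 1 ×ˢ s ×ˢ t) := by
    ext x
    simp only [mem_convexJoin, mem_image, mem_prod, segment_eq_image ℝ, Prod.exists]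
    constructor
    · rintro ⟨a, ha, b, hb, ⟨θ, hθ, rfl⟩⟩
      exact ⟨θ, a, b, ⟨hθ, ha, hb⟩, rfl⟩
    · rintro ⟨θ, a, b, ⟨hθ, ha, hb⟩, rfl⟩
      exact ⟨a, ha, b, hb, θ, hθ, rfl⟩
  rw [heq]
  refine (isCompact_Icc.prod (hs.prod ht)).image ?_
  exact ((continuous_const.sub continuous_fst).smul
      (continuous_fst.comp continuous_snd)).add
    (continuous_fst.smul ((continuous_snd.comp continuous_snd)))

/-- Let `B ⊂ X` be a convex, symmetric, norm-compact set such that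
`D = conv(B_X ∪ B)` is the closed unit ball of an equivalent norm `N` on `X`. Then the
closed unit ball of the bidual norm `N**` on `X**` (i.e., the weak* closure of the
canonical image of `D` in `X**`) equals `conv(B_{X**} ∪ B)`, where `B` and the bidual unit
ball are viewed inside `X**` (with its weak* topology). -/
theorem bidual_ball_of_renorming {X : Type*} [NormedAddCommGroup X] [NormedSpace ℝ X]
    [CompleteSpace X] (B : Set X) (hBconv : Convex ℝ B) (hBsym : ∀ x ∈ B, -x ∈ B)
    (hBcpt : IsCompact B) (N : X → ℝ) (hN : IsEquivNorm N)
    (hD : {x : X | N x ≤ 1} = convexHull ℝ (Metric.closedBall 0 1 ∪ B)) :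
    closure ((fun x : X => StrongDual.toWeakDual (inclusionInDoubleDual ℝ X x)) ''
        {x : X | N x ≤ 1}) =
      convexHull ℝ
        ((⇑StrongDual.toWeakDual '' Metric.closedBall (0 : StrongDual ℝ (StrongDual ℝ X)) 1) ∪
          ((fun x : X => StrongDual.toWeakDual (inclusionInDoubleDual ℝ X x)) '' B)) := by
  set jL : X →ₗ[ℝ] WeakDual ℝ (StrongDual ℝ X) :=
    (StrongDual.toWeakDual : StrongDual ℝ (StrongDual ℝ X) ≃ₗ[ℝ] WeakDual ℝ (StrongDual ℝ X)).toLinearMap.comp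
      (inclusionInDoubleDual ℝ X).toLinearMap with hjL
  have hj : (fun x : X => StrongDual.toWeakDual (inclusionInDoubleDual ℝ X x)) = ⇑jL := rfl
  set K1 : Set (WeakDual ℝ (StrongDual ℝ X)) :=
    ⇑StrongDual.toWeakDual '' Metric.closedBall (0 : StrongDual ℝ (StrongDual ℝ X)) 1 with hK1
  set K2 : Set (WeakDual ℝ (StrongDual ℝ X)) := ⇑jL '' B with hK2
  set D : Set X := {x : X | N x ≤ 1} with hDdef
  rw [hj]
  have hDconv : Convex ℝ D := hD ▸ convex_convexHull ℝ _
  have hballD : Metric.closedBall (0:X) 1 ⊆ D := by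
    rw [hD]; exact subset_union_left.trans (subset_convexHull ℝ _)
  have hBD : B ⊆ D := by
    rw [hD]; exact subset_union_right.trans (subset_convexHull ℝ _)
  have hjcont : Continuous ⇑jL :=
    Dual.toWeakDual_continuous.comp (inclusionInDoubleDual ℝ X).continuous
  have hK1conv : Convex ℝ K1 :=
    (convex_closedBall (0 : StrongDual ℝ (StrongDual ℝ X)) 1).linear_image
      (StrongDual.toWeakDual (𝕜 := ℝ) (E := StrongDual ℝ X)).toLinearMap
  have hK2conv : Convex ℝ K2 := hBconv.linear_image jL
  have hK1cpt : IsCompact K1 := by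
    have : K1 = ⇑WeakDual.toStrongDual ⁻¹' Metric.closedBall (0 : StrongDual ℝ (StrongDual ℝ X)) 1 := by
      rw [hK1]
      exact (StrongDual.toWeakDual (𝕜 := ℝ) (E := StrongDual ℝ X)).image_eq_preimage_symm _
    rw [this]
    exact WeakDual.isCompact_closedBall 0 1
  have hK2cpt : IsCompact K2 := hBcpt.image hjcont
  have hjball : ⇑jL '' Metric.closedBall (0:X) 1 ⊆ K1 := by
    rintro _ ⟨x, hx, rfl⟩
    refine ⟨inclusionInDoubleDual ℝ X x, ?_, rfl⟩
    refine (mem_closedBall_zero_iff (E := StrongDual ℝ (StrongDual ℝ X))).mpr ?_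
    exact (double_dual_bound ℝ X x).trans (mem_closedBall_zero_iff.mp hx)
  apply le_antisymm
  · -- closure (jL '' D) ⊆ convexHull (K1 ∪ K2)
    have himg : ⇑jL '' D ⊆ convexHull ℝ (K1 ∪ K2) := by
      rw [hD, jL.image_convexHull, image_union]
      exact convexHull_mono (union_subset_union hjball (subset_refl _))
    rcases eq_empty_or_nonempty B with hBe | hBne
    · have hK2e : K2 = ∅ := by rw [hK2, hBe, image_empty]
      have hhull : convexHull ℝ (K1 ∪ K2) = K1 := by
        rw [hK2e, union_empty, hK1conv.convexHull_eq]
      rw [hhull] at himg ⊢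
      exact closure_minimal himg hK1cpt.isClosed
    · have hK1ne : K1.Nonempty := ⟨_, ⟨0, by simp, rfl⟩⟩
      have hK2ne : K2.Nonempty := hBne.image _
      have hhull : convexHull ℝ (K1 ∪ K2) = convexJoin ℝ K1 K2 :=
        Convex.convexHull_union (E := WeakDual ℝ (StrongDual ℝ X)) hK1conv hK2conv hK1ne hK2ne
      rw [hhull] at himg ⊢
      exact closure_minimal himg (isCompact_convexJoin' hK1cpt hK2cpt).isClosed
  · -- convexHull (K1 ∪ K2) ⊆ closure (jL '' D)
    have hclconv : Convex ℝ (closure (⇑jL '' D)) :=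
      Convex.closure (E := WeakDual ℝ (StrongDual ℝ X)) (hDconv.linear_image jL)
    apply convexHull_min _ hclconv
    apply union_subset
    · refine (goldstine (X := X)).trans ?_
      rw [hj]
      exact closure_mono (image_mono hballD)
    · exact (image_mono hBD).trans subset_closure
end
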